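/- For odd integers 3 ≤ i ≤ j, every coefficient of q_i(x)·q_j(x) is less than or equal to the corresponding coefficient of q_{i+j}(x). Consequently, for a 2-regular graph that is a disjoint union of two odd cycles C_i and C_j, φ(m, C_i ∪ C_j) ≤ φ(m, C_{i+j}) for all m. -/

import Mathlib

open Polynomial

/-- Number of `m`-matchings of a simple graph. -/
noncomputable def matchCount {V : Type*} [Fintype V] (G : SimpleGraph V) (m : ℕ) : ℕ := by
  classical
  exact (((Finset.univ : Finset (Sym2 V)).powersetCard m).filter
    (fun s => (∀ e ∈ s, e ∈ G.edgeSet) ∧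
      ∀ e ∈ s, ∀ f ∈ s, e ≠ f → ∀ v ∈ e, v ∉ f)).card


/-- Cycle matching polynomials via the recurrence `q_k = q_{k-1} + x q_{k-2}`,
`q_0 = 2`, `q_1 = 1` (so `q_2 = 1 + 2x`). -/
noncomputable def qpoly : ℕ → Polynomial ℚ
  | 0 => 2
  | 1 => 1
  | (k+2) => qpoly (k+1) + Polynomial.X * qpoly k

open Finset SimpleGraph
open Fin.NatCast

set_option linter.unusedSectionVars false

lemma qpoly_rec (n : ℕ) : qpoly (n+2) = qpoly (n+1) + X * qpoly n := rfl

lemma qpoly_mul (i : ℕ) : ∀ d : ℕ,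
    qpoly i * qpoly (i + d) = qpoly (2*i + d) + (-X)^i * qpoly d := by
  induction i using Nat.twoStepInduction with
  | zero =>
    intro d
    have : qpoly 0 = 2 := rfl
    simp only [Nat.zero_add, Nat.mul_zero, this, pow_zero]
    ring
  | one =>
    intro d
    show 1 * qpoly (1 + d) = qpoly (2 * 1 + d) + (-X)^1 * qpoly d
    rw [show 2 * 1 + d = d + 2 by ring, qpoly_rec, show 1 + d = d + 1 by ring]
    ring
  | more i ih2 ih1 =>
    intro d
    have e1 := ih1 (d + 1)
    have e2 := ih2 (d + 2)
    rw [show i + 1 + (d + 1) = i + 2 + d by ring] at e1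
    rw [show i + (d + 2) = i + 2 + d by ring] at e2
    have r2 : qpoly (i+2) = qpoly (i+1) + X * qpoly i := qpoly_rec i
    have r3 : qpoly (2*(i+2) + d) = qpoly (2*(i+1) + (d+1)) + X * qpoly (2*(i+1)+d) := by
      rw [show 2*(i+2) + d = (2*i+d+2)+2 by ring, qpoly_rec,
        show 2*i+d+2+1 = 2*(i+1)+(d+1) by ring, show 2*i+d+2 = 2*(i+1)+d by ring]
    have r4 : qpoly (d+2) = qpoly (d+1) + X * qpoly d := qpoly_rec d
    rw [show 2*(i+1)+(d+1) = 2*(i+1)+(d+1) by ring] at e1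
    rw [show 2*i+(d+2) = 2*(i+1)+d by ring] at e2
    rw [r2, r3]
    rw [pow_succ, pow_succ]
    linear_combination e1 + X * e2 + (-X)^i * X * r4

lemma qpoly_coeff_nonneg (n : ℕ) : ∀ m, 0 ≤ (qpoly n).coeff m := by
  induction n using Nat.twoStepInduction with
  | zero =>
    intro m
    show (0:ℚ) ≤ (2 : Polynomial ℚ).coeff m
    rw [show (2 : Polynomial ℚ) = C 2 from (map_ofNat C 2).symm, coeff_C]
    split <;> norm_num
  | one =>
    intro m
    show (0:ℚ) ≤ (1 : Polynomial ℚ).coeff m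
    rw [coeff_one]; split <;> norm_num
  | more n ih2 ih1 =>
    intro m
    cases m with
    | zero =>
      rw [qpoly_rec, coeff_add, mul_coeff_zero, coeff_X_zero, zero_mul]
      have := ih1 0; linarith
    | succ m =>
      rw [qpoly_rec, coeff_add, coeff_X_mul]
      have := ih1 (m+1); have := ih2 m; linarith

lemma part1 (i j : ℕ) (hij : i ≤ j) (hi : Odd i) :
    ∀ m : ℕ, (qpoly i * qpoly j).coeff m ≤ (qpoly (i + j)).coeff m := by
  intro m
  have h := qpoly_mul i (j - i)
  rw [Nat.add_sub_cancel' hij, show 2*i + (j-i) = i + j by omega] at h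
  have h2 : qpoly (i+j) = qpoly i * qpoly j + X^i * qpoly (j-i) := by
    rw [h, hi.neg_pow]; ring
  rw [h2, coeff_add]
  have hnn : 0 ≤ ((X:Polynomial ℚ)^i * qpoly (j-i)).coeff m := by
    rw [mul_comm, coeff_mul_X_pow']
    split
    · exact qpoly_coeff_nonneg _ _
    · exact le_refl 0
  linarith

noncomputable def ppoly : ℕ → Polynomial ℚ
  | 0 => 1
  | 1 => 1 + Polynomial.X
  | (k+2) => ppoly (k+1) + Polynomial.X * ppoly k

lemma ppoly_rec (n : ℕ) : ppoly (n+2) = ppoly (n+1) + X * ppoly n := rfl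

/-- Linear nonconsecutive subsets of `range n` of size `m`. -/
def NP (n m : ℕ) : Finset (Finset ℕ) :=
  ((Finset.range n).powersetCard m).filter (fun s => ∀ a ∈ s, a+1 ∉ s)

/-- Cyclic nonconsecutive subsets of `range n` of size `m`. -/
def NC (n m : ℕ) : Finset (Finset ℕ) :=
  ((Finset.range n).powersetCard m).filter (fun s => ∀ a ∈ s, (a+1) % n ∉ s)

lemma mem_NP {n m : ℕ} {s : Finset ℕ} :
    s ∈ NP n m ↔ (∀ a ∈ s, a < n) ∧ s.card = m ∧ ∀ a ∈ s, a+1 ∉ s := by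
  simp only [NP, mem_filter, mem_powersetCard, and_assoc]
  constructor
  · rintro ⟨h1, h2, h3⟩
    exact ⟨fun a ha => Finset.mem_range.mp (h1 ha), h2, h3⟩
  · rintro ⟨h1, h2, h3⟩
    exact ⟨fun a ha => Finset.mem_range.mpr (h1 a ha), h2, h3⟩

lemma mem_NC {n m : ℕ} {s : Finset ℕ} :
    s ∈ NC n m ↔ (∀ a ∈ s, a < n) ∧ s.card = m ∧ ∀ a ∈ s, (a+1) % n ∉ s := by
  simp only [NC, mem_filter, mem_powersetCard, and_assoc]
  constructor
  · rintro ⟨h1, h2, h3⟩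
    exact ⟨fun a ha => Finset.mem_range.mp (h1 ha), h2, h3⟩
  · rintro ⟨h1, h2, h3⟩
    exact ⟨fun a ha => Finset.mem_range.mpr (h1 a ha), h2, h3⟩

lemma NP_zero (n : ℕ) : NP n 0 = {∅} := by
  ext s
  simp only [mem_NP, Finset.mem_singleton, Finset.card_eq_zero]
  constructor
  · rintro ⟨-, rfl, -⟩; rfl
  · rintro rfl; simp

lemma NC_zero (n : ℕ) : NC n 0 = {∅} := by
  ext s
  simp only [mem_NC, Finset.mem_singleton, Finset.card_eq_zero]
  constructor
  · rintro ⟨-, rfl, -⟩; rfl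
  · rintro rfl; simp

lemma NP_zero_succ (m : ℕ) : NP 0 (m+1) = ∅ := by
  ext s
  simp only [mem_NP, Finset.notMem_empty, iff_false]
  rintro ⟨h1, h2, -⟩
  obtain ⟨a, ha⟩ := Finset.card_pos.mp (by omega : 0 < s.card)
  exact absurd (h1 a ha) (by omega)

lemma NP_one_succ_succ (m : ℕ) : NP 1 (m+2) = ∅ := by
  ext s
  simp only [mem_NP, Finset.notMem_empty, iff_false]
  rintro ⟨h1, h2, -⟩
  have : s ⊆ {0} := fun a ha => by
    have := h1 a ha; simp; omega
  have := Finset.card_le_card this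
  simp at this; omega

lemma NP_one_one : NP 1 1 = {{0}} := by
  ext s
  simp only [mem_NP, Finset.mem_singleton]
  constructor
  · rintro ⟨h1, h2, -⟩
    obtain ⟨a, rfl⟩ := Finset.card_eq_one.mp h2
    have := h1 a (Finset.mem_singleton_self a)
    interval_cases a
    rfl
  · rintro rfl
    refine ⟨by simp, by simp, by simp⟩

lemma NP_card_rec (n m : ℕ) :
    (NP (n+2) (m+1)).card = (NP (n+1) (m+1)).card + (NP n m).card := by
  classical
  rw [← Finset.card_filter_add_card_filter_not (s := NP (n+2) (m+1))
    (p := fun s => (n+1) ∉ s)]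
  congr 1
  · congr 1
    ext s
    simp only [mem_filter, mem_NP, not_not]
    constructor
    · rintro ⟨⟨h1, h2, h3⟩, h4⟩
      exact ⟨fun a ha => by have := h1 a ha; have : a ≠ n+1 := fun h => h4 (h ▸ ha); omega,
        h2, h3⟩
    · rintro ⟨h1, h2, h3⟩
      exact ⟨⟨fun a ha => by have := h1 a ha; omega, h2, h3⟩,
        fun h => by have := h1 _ h; omega⟩
  · apply Finset.card_nbij' (i := fun s => s.erase (n+1)) (j := fun s => insert (n+1) s)
    · intro s hs
      simp only [Finset.mem_coe, mem_filter, mem_NP, not_not] at hs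
      obtain ⟨⟨h1, h2, h3⟩, h4⟩ := hs
      rw [Finset.mem_coe, mem_NP]
      refine ⟨?_, ?_, ?_⟩
      · intro a ha
        rw [Finset.mem_erase] at ha
        have h5 := h1 a ha.2
        have : a ≠ n := by
          rintro rfl
          exact h3 a ha.2 h4
        omega
      · rw [Finset.card_erase_of_mem h4, h2]; omega
      · intro a ha hb
        rw [Finset.mem_erase] at ha hb
        exact h3 a ha.2 hb.2
    · intro s hs
      rw [Finset.mem_coe, mem_NP] at hs
      obtain ⟨h1, h2, h3⟩ := hs
      have hn1 : n+1 ∉ s := fun h => by have := h1 _ h; omega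
      simp only [Finset.mem_coe, mem_filter, mem_NP, not_not, Finset.mem_insert]
      refine ⟨⟨?_, ?_, ?_⟩, by simp⟩
      · intro a ha
        rcases ha with rfl | ha
        · omega
        · have := h1 a ha; omega
      · rw [Finset.card_insert_of_notMem hn1, h2]
      · intro a ha hb
        rcases ha with rfl | ha
        · rcases hb with h | h
          · omega
          · have := h1 _ h; omega
        · rcases hb with h | h
          · have := h1 a ha; omega
          · exact h3 a ha h
    · intro s hs
      simp only [Finset.mem_coe, mem_filter, not_not] at hs
      exact Finset.insert_erase hs.2
    · intro s hs
      rw [Finset.mem_coe, mem_NP] at hs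
      exact Finset.erase_insert (fun h => by have := hs.1 _ h; omega)

def np (n m : ℕ) : ℕ := (NP n m).card

lemma ppoly_coeff (n : ℕ) : ∀ m, (ppoly n).coeff m = (np n m : ℚ) := by
  induction n using Nat.twoStepInduction with
  | zero =>
    intro m
    show (1 : Polynomial ℚ).coeff m = _
    cases m with
    | zero => simp [np, NP_zero]
    | succ m => simp [np, NP_zero_succ, coeff_one]
  | one =>
    intro m
    show (1 + X : Polynomial ℚ).coeff m = _
    match m with
    | 0 => simp [np, NP_zero]
    | 1 => simp [np, NP_one_one, coeff_one, coeff_X]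
    | (m+2) =>
      simp only [coeff_add, coeff_one, coeff_X, np, NP_one_succ_succ, Finset.card_empty]
      norm_num
  | more n ih2 ih1 =>
    intro m
    rw [ppoly_rec, coeff_add]
    cases m with
    | zero =>
      rw [mul_coeff_zero, coeff_X_zero, zero_mul, add_zero, ih1 0]
      simp [np, NP_zero]
    | succ m =>
      rw [coeff_X_mul, ih1 (m+1), ih2 m]
      have := NP_card_rec n m
      simp only [np]
      rw [this]
      push_cast
      ring

lemma NC_card_rec (k m : ℕ) :
    (NC (k+3) (m+1)).card = (NP (k+2) (m+1)).card + (NP k m).card := by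
  classical
  rw [← Finset.card_filter_add_card_filter_not (s := NC (k+3) (m+1))
    (p := fun s => (k+2) ∉ s)]
  congr 1
  · congr 1
    ext s
    simp only [mem_filter, mem_NC, mem_NP, not_not]
    constructor
    · rintro ⟨⟨h1, h2, h3⟩, h4⟩
      refine ⟨fun a ha => ?_, h2, fun a ha => ?_⟩
      · have := h1 a ha
        have : a ≠ k+2 := fun h => h4 (h ▸ ha)
        omega
      · have ha2 := h1 a ha
        have hne : a ≠ k+2 := fun h => h4 (h ▸ ha)
        have := h3 a ha
        rwa [Nat.mod_eq_of_lt (by omega)] at this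
    · rintro ⟨h1, h2, h3⟩
      refine ⟨⟨fun a ha => by have := h1 a ha; omega, h2, fun a ha => ?_⟩,
        fun h => by have := h1 _ h; omega⟩
      rw [Nat.mod_eq_of_lt (by have := h1 a ha; omega)]
      exact h3 a ha
  · apply Finset.card_nbij' (i := fun s => (s.erase (k+2)).image (· - 1))
      (j := fun t => insert (k+2) (t.image (· + 1)))
    · -- maps into NP k m
      intro s hs
      simp only [Finset.mem_coe, mem_filter, mem_NC, not_not] at hs
      obtain ⟨⟨h1, h2, h3⟩, h4⟩ := hs
      have h0 : 0 ∉ s := by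
        have := h3 (k+2) h4
        rwa [Nat.mod_self] at this
      have hk1 : k+1 ∉ s := by
        intro h
        have := h3 (k+1) h
        rw [Nat.mod_eq_of_lt (by omega)] at this
        exact this h4
      have hmem : ∀ a ∈ s.erase (k+2), 1 ≤ a ∧ a ≤ k := by
        intro a ha
        rw [Finset.mem_erase] at ha
        have := h1 a ha.2
        have h5 : a ≠ 0 := fun h => h0 (h ▸ ha.2)
        have h6 : a ≠ k+1 := fun h => hk1 (h ▸ ha.2)
        omega
      rw [Finset.mem_coe, mem_NP]
      refine ⟨?_, ?_, ?_⟩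
      · intro a ha
        rw [Finset.mem_image] at ha
        obtain ⟨b, hb, rfl⟩ := ha
        have := hmem b hb
        omega
      · have hinj : Set.InjOn (· - 1) (s.erase (k+2)) := by
          intro a ha b hb hab
          have := hmem a ha; have := hmem b hb
          simp only at hab
          omega
        rw [Finset.card_image_of_injOn hinj, Finset.card_erase_of_mem h4, h2]
        omega
      · intro a ha hb
        rw [Finset.mem_image] at ha hb
        obtain ⟨b, hb', rfl⟩ := ha
        obtain ⟨c, hc, hcb⟩ := hb
        have hbm := hmem b hb'; have hcm := hmem c hc
        have : c = b + 1 := by omega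
        subst this
        rw [Finset.mem_erase] at hb' hc
        have := h3 b hb'.2
        rw [Nat.mod_eq_of_lt (by omega)] at this
        exact this hc.2
    · -- j maps into the filter
      intro t ht
      rw [Finset.mem_coe, mem_NP] at ht
      obtain ⟨h1, h2, h3⟩ := ht
      have hnm : (k+2) ∉ t.image (· + 1) := by
        rw [Finset.mem_image]
        rintro ⟨a, ha, hae⟩
        have := h1 a ha; omega
      simp only [Finset.mem_coe, mem_filter, mem_NC, not_not, Finset.mem_insert]
      refine ⟨⟨?_, ?_, ?_⟩, by simp⟩
      · intro a ha
        rcases ha with rfl | ha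
        · omega
        · rw [Finset.mem_image] at ha
          obtain ⟨b, hb, rfl⟩ := ha
          have := h1 b hb; omega
      · rw [Finset.card_insert_of_notMem hnm,
          Finset.card_image_of_injOn (fun a _ b _ h => by omega), h2]
      · intro a ha hb
        rcases ha with rfl | ha
        · rw [Nat.mod_self] at hb
          rcases hb with h | h
          · omega
          · rw [Finset.mem_image] at h
            obtain ⟨b, hb', hbe⟩ := h
            omega
        · rw [Finset.mem_image] at ha
          obtain ⟨b, hb', rfl⟩ := ha
          have hbk := h1 b hb'
          rw [Nat.mod_eq_of_lt (by omega)] at hb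
          rcases hb with h | h
          · omega
          · rw [Finset.mem_image] at h
            obtain ⟨c, hc, hce⟩ := h
            have : c = b + 1 := by omega
            exact h3 b hb' (this ▸ hc)
    · -- left inverse
      intro s hs
      simp only [Finset.mem_coe, mem_filter, mem_NC, not_not] at hs
      obtain ⟨⟨h1, h2, h3⟩, h4⟩ := hs
      have h0 : 0 ∉ s := by
        have := h3 (k+2) h4
        rwa [Nat.mod_self] at this
      ext a
      simp only [Finset.mem_insert, Finset.mem_image, Finset.mem_erase]
      constructor
      · rintro (rfl | ⟨b, ⟨c, ⟨hc1, hc2⟩, rfl⟩, rfl⟩)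
        · exact h4
        · have : c ≠ 0 := fun h => h0 (h ▸ hc2)
          have : c - 1 + 1 = c := by omega
          rwa [this]
      · intro ha
        by_cases h : a = k + 2
        · exact Or.inl h
        · right
          have ha0 : a ≠ 0 := fun h' => h0 (h' ▸ ha)
          exact ⟨a - 1, ⟨a, ⟨h, ha⟩, rfl⟩, by omega⟩
    · -- right inverse
      intro t ht
      rw [Finset.mem_coe, mem_NP] at ht
      obtain ⟨h1, h2, h3⟩ := ht
      ext a
      simp only [Finset.mem_image, Finset.mem_erase, Finset.mem_insert]
      constructor
      · rintro ⟨b, ⟨hb1, rfl | hb2⟩, rfl⟩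
        · omega
        · obtain ⟨c, hc, rfl⟩ := hb2
          simpa using hc
      · intro ha
        refine ⟨a + 1, ⟨?_, Or.inr ?_⟩, by omega⟩
        · have := h1 a ha; omega
        · exact ⟨a, ha, rfl⟩

lemma qpoly_zero : qpoly 0 = 2 := rfl
lemma qpoly_one : qpoly 1 = 1 := rfl
lemma ppoly_zero : ppoly 0 = 1 := rfl
lemma ppoly_one : ppoly 1 = 1 + X := rfl

lemma qpoly_eq_ppoly (k : ℕ) : qpoly (k+3) = ppoly (k+2) + X * ppoly k := by
  induction k using Nat.twoStepInduction with
  | zero =>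
    show qpoly 3 = ppoly 2 + X * ppoly 0
    rw [show (3:ℕ) = 1+2 from rfl, qpoly_rec, qpoly_rec 0, ppoly_rec 0,
      qpoly_zero, qpoly_one, ppoly_zero, ppoly_one]
    ring
  | one =>
    show qpoly 4 = ppoly 3 + X * ppoly 1
    rw [show (4:ℕ) = 2+2 from rfl, show (3:ℕ) = 1+2 from rfl, qpoly_rec, qpoly_rec,
      qpoly_rec 0, ppoly_rec 1, ppoly_rec 0, qpoly_zero, qpoly_one, ppoly_zero, ppoly_one]
    ring
  | more k ih2 ih1 =>
    rw [show k+2+3 = (k+3)+2 by ring, qpoly_rec, show k+3+1 = (k+1)+3 by ring, ih1, ih2,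
      show k+2+2 = (k+2)+2 by ring, ppoly_rec (k+2), ppoly_rec k,
      show k+1+2 = k+3 by ring]
    ring

lemma NC_card_eq_coeff (k m : ℕ) : ((NC (k+3) m).card : ℚ) = (qpoly (k+3)).coeff m := by
  rw [qpoly_eq_ppoly, coeff_add]
  cases m with
  | zero =>
    rw [mul_coeff_zero, coeff_X_zero, zero_mul, add_zero, ppoly_coeff, NC_zero]
    simp [np, NP_zero]
  | succ m =>
    rw [coeff_X_mul, ppoly_coeff, ppoly_coeff, NC_card_rec]
    push_cast [np]
    ring

lemma matchCount_def {V : Type*} [Fintype V] (G : SimpleGraph V) (m : ℕ)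
    [DecidablePred (fun s : Finset (Sym2 V) => (∀ e ∈ s, e ∈ G.edgeSet) ∧
      ∀ e ∈ s, ∀ f ∈ s, e ≠ f → ∀ v ∈ e, v ∉ f)] :
    matchCount G m = (((Finset.univ : Finset (Sym2 V)).powersetCard m).filter
    (fun s => (∀ e ∈ s, e ∈ G.edgeSet) ∧
      ∀ e ∈ s, ∀ f ∈ s, e ≠ f → ∀ v ∈ e, v ∉ f)).card := by
  rw [matchCount]
  congr

section CycleSec
variable (k : ℕ)

local notation "N" => k+3

noncomputable def eF (a : ℕ) : Sym2 (Fin (k+3)) := s((a : Fin (k+3)), (a : Fin (k+3)) + 1)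

lemma finval {a : ℕ} (h : a < N) : ((a : Fin N)).val = a := by
  rw [Fin.val_natCast, Nat.mod_eq_of_lt h]

lemma finsucc {a : ℕ} (h : a < N) : (((a : Fin N) + 1)).val = (a+1) % N := by
  rw [Fin.val_add, Fin.val_one, finval k h]

lemma eF_adj {a : ℕ} (_ : a < N) : (cycleGraph N).Adj (a : Fin N) ((a : Fin N) + 1) := by
  rw [cycleGraph_adj]
  right
  rw [add_sub_cancel_left]

lemma fin_two_ne (x : Fin N) : x + 1 + 1 ≠ x := by
  intro h
  have hv := congrArg Fin.val h
  rw [Fin.val_add, Fin.val_add, Fin.val_one] at hv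
  have hx := x.isLt
  by_cases h1 : x.val + 1 < N
  · rw [Nat.mod_eq_of_lt h1] at hv
    by_cases h2 : x.val + 1 + 1 < N
    · rw [Nat.mod_eq_of_lt h2] at hv; omega
    · rw [show x.val + 1 + 1 = N by omega, Nat.mod_self] at hv; omega
  · rw [show x.val + 1 = N by omega, Nat.mod_self, Nat.zero_add,
      Nat.mod_eq_of_lt (by omega)] at hv
    omega

lemma eF_inj {a b : ℕ} (ha : a < N) (hb : b < N) (h : eF k a = eF k b) : a = b := by
  rw [eF, eF, Sym2.eq_iff] at h
  rcases h with ⟨h1, -⟩ | ⟨h1, h2⟩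
  · have := congrArg Fin.val h1
    rwa [finval k ha, finval k hb] at this
  · -- a = b+1 and a+1 = b in Fin N: contradiction
    exfalso
    apply fin_two_ne k (a : Fin N)
    rw [h2]
    exact h1.symm

lemma edge_form {e : Sym2 (Fin N)} (he : e ∈ (cycleGraph N).edgeSet) :
    ∃ a : ℕ, a < N ∧ e = eF k a := by
  induction e with
  | _ u v =>
    rw [mem_edgeSet, cycleGraph_adj] at he
    rcases he with h | h
    · refine ⟨v.val, v.isLt, ?_⟩
      rw [eF, Fin.cast_val_eq_self]
      rw [sub_eq_iff_eq_add] at h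
      rw [Sym2.eq_iff]
      right
      exact ⟨by rw [h]; exact add_comm 1 v, rfl⟩
    · refine ⟨u.val, u.isLt, ?_⟩
      rw [eF, Fin.cast_val_eq_self]
      rw [sub_eq_iff_eq_add] at h
      rw [Sym2.eq_iff]
      left
      exact ⟨rfl, by rw [h]; exact add_comm 1 u⟩

end CycleSec

open SimpleGraph in
lemma matchCount_cycle (k m : ℕ) :
    matchCount (cycleGraph (k+3)) m = (NC (k+3) m).card := by
  classical
  rw [matchCount_def]
  symm
  apply Finset.card_nbij (i := fun t => t.image (eF k))
  · -- maps NC into matchings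
    intro t ht
    rw [Finset.mem_coe, mem_NC] at ht
    obtain ⟨h1, h2, h3⟩ := ht
    simp only [Finset.mem_coe, Finset.mem_filter, Finset.mem_powersetCard_univ]
    refine ⟨?_, ?_, ?_⟩
    · rw [Finset.card_image_of_injOn (fun a ha b hb hab => eF_inj k (h1 a ha) (h1 b hb) hab), h2]
    · intro e he
      rw [Finset.mem_image] at he
      obtain ⟨a, ha, rfl⟩ := he
      exact eF_adj k (h1 a ha)
    · intro e he f hf hef v hv
      rw [Finset.mem_image] at he hf
      obtain ⟨a, ha, rfl⟩ := he
      obtain ⟨b, hb, rfl⟩ := hf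
      have hab : a ≠ b := fun h => hef (h ▸ rfl)
      rw [eF, Sym2.mem_iff] at hv
      rw [eF, Sym2.mem_iff]
      have hva := h1 a ha
      have hvb := h1 b hb
      rintro (h | h)
      · rcases hv with rfl | rfl
        · exact hab (by
            have := congrArg Fin.val h
            rwa [finval k hva, finval k hvb] at this)
        · -- (a:Fin)+1 = b
          have := congrArg Fin.val h
          rw [finsucc k hva, finval k hvb] at this
          exact h3 a ha (this ▸ hb)
      · rcases hv with rfl | rfl
        · -- a = b+1
          have := congrArg Fin.val h
          rw [finval k hva, finsucc k hvb] at this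
          exact h3 b hb (this ▸ ha)
        · -- a+1 = b+1
          have := congrArg Fin.val h
          rw [finsucc k hva, finsucc k hvb] at this
          have : a = b := by
            rcases Nat.lt_or_ge (a+1) (k+3) with h' | h'
            · rcases Nat.lt_or_ge (b+1) (k+3) with h'' | h''
              · rw [Nat.mod_eq_of_lt h', Nat.mod_eq_of_lt h''] at this; omega
              · rw [Nat.mod_eq_of_lt h', show b+1 = k+3 by omega, Nat.mod_self] at this; omega
            · rcases Nat.lt_or_ge (b+1) (k+3) with h'' | h''
              · rw [show a+1 = k+3 by omega, Nat.mod_self, Nat.mod_eq_of_lt h''] at this; omega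
              · omega
          exact hab this
  · -- injective
    intro t1 ht1 t2 ht2 h
    simp only [Finset.coe_mem] at *
    rw [Finset.mem_coe, mem_NC] at ht1 ht2
    ext a
    constructor
    · intro ha
      have : eF k a ∈ t2.image (eF k) := h ▸ Finset.mem_image_of_mem _ ha
      rw [Finset.mem_image] at this
      obtain ⟨b, hb, hba⟩ := this
      rwa [← eF_inj k (ht2.1 b hb) (ht1.1 a ha) hba]
    · intro ha
      have : eF k a ∈ t1.image (eF k) := h ▸ Finset.mem_image_of_mem _ ha
      rw [Finset.mem_image] at this
      obtain ⟨b, hb, hba⟩ := this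
      rwa [← eF_inj k (ht1.1 b hb) (ht2.1 a ha) hba]
  · -- surjective
    intro s hs
    simp only [Finset.mem_coe, Finset.mem_filter, Finset.mem_powersetCard_univ] at hs
    obtain ⟨hcard, hedge, hmatch⟩ := hs
    refine ⟨(Finset.range (k+3)).filter (fun a => eF k a ∈ s), Finset.mem_coe.mpr ?_, ?_⟩
    · rw [mem_NC]
      refine ⟨fun a ha => by simp only [Finset.mem_filter, Finset.mem_range] at ha; exact ha.1,
        ?_, ?_⟩
      · -- card
        have himg : (((Finset.range (k+3)).filter (fun a => eF k a ∈ s)).image (eF k)) = s := by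
          ext e
          rw [Finset.mem_image]
          constructor
          · rintro ⟨a, ha, rfl⟩
            exact (Finset.mem_filter.mp ha).2
          · intro he
            obtain ⟨a, ha, rfl⟩ := edge_form k (hedge e he)
            exact ⟨a, Finset.mem_filter.mpr ⟨Finset.mem_range.mpr ha, he⟩, rfl⟩
        have hinj : Set.InjOn (eF k) ((Finset.range (k+3)).filter (fun a => eF k a ∈ s)) := by
          intro a ha b hb hab
          simp only [Finset.coe_filter, Set.mem_setOf_eq, Finset.mem_range] at ha hb
          exact eF_inj k ha.1 hb.1 hab
        have hc := Finset.card_image_of_injOn hinj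
        rw [himg] at hc
        rw [← hc, hcard]
      · -- cyclic condition
        intro a ha hb
        simp only [Finset.mem_filter, Finset.mem_range] at ha hb
        have hne : eF k a ≠ eF k ((a+1) % (k+3)) := by
          intro h
          have := eF_inj k ha.1 hb.1 h
          rcases Nat.lt_or_ge (a+1) (k+3) with h' | h'
          · rw [Nat.mod_eq_of_lt h'] at this; omega
          · rw [show a+1 = k+3 by omega, Nat.mod_self] at this; omega
        apply hmatch (eF k a) ha.2 (eF k ((a+1) % (k+3))) hb.2 hne ((a : Fin (k+3)) + 1)
        · rw [eF, Sym2.mem_iff]; right; rfl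
        · rw [eF, Sym2.mem_iff]
          left
          apply Fin.val_injective
          rw [finsucc k ha.1, finval k hb.1]
    · ext e
      rw [Finset.mem_image]
      constructor
      · rintro ⟨a, ha, rfl⟩
        exact (Finset.mem_filter.mp ha).2
      · intro he
        obtain ⟨a, ha, rfl⟩ := edge_form k (hedge e he)
        exact ⟨a, Finset.mem_filter.mpr ⟨Finset.mem_range.mpr ha, he⟩, rfl⟩

section SumSec

variable {α β : Type*} [Fintype α] [Fintype β] (G : SimpleGraph α) (H : SimpleGraph β)

lemma map_inl_ne_inr (e : Sym2 α) (f : Sym2 β) :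
    Sym2.map Sum.inl e ≠ (Sym2.map Sum.inr f : Sym2 (α ⊕ β)) := by
  induction e with
  | _ a b =>
    induction f with
    | _ c d =>
      intro h
      rw [Sym2.map_pair_eq, Sym2.map_pair_eq, Sym2.eq_iff] at h
      rcases h with ⟨h, -⟩ | ⟨h, -⟩ <;> exact Sum.inl_ne_inr h

lemma sum_adj_inl {a b : α} : (G ⊕g H).Adj (Sum.inl a) (Sum.inl b) ↔ G.Adj a b := Iff.rfl
lemma sum_adj_inr {a b : β} : (G ⊕g H).Adj (Sum.inr a) (Sum.inr b) ↔ H.Adj a b := Iff.rfl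

lemma sum_edge_form {e : Sym2 (α ⊕ β)} (he : e ∈ (G ⊕g H).edgeSet) :
    (∃ e' ∈ G.edgeSet, e = Sym2.map Sum.inl e') ∨
    (∃ e' ∈ H.edgeSet, e = Sym2.map Sum.inr e') := by
  induction e with
  | _ u v =>
    rw [mem_edgeSet] at he
    match u, v with
    | Sum.inl a, Sum.inl b =>
      exact Or.inl ⟨s(a, b), (sum_adj_inl G H).mp he, by rw [Sym2.map_pair_eq]⟩
    | Sum.inr a, Sum.inr b =>
      exact Or.inr ⟨s(a, b), (sum_adj_inr G H).mp he, by rw [Sym2.map_pair_eq]⟩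
    | Sum.inl a, Sum.inr b => exact absurd he (by simp [SimpleGraph.sum])
    | Sum.inr a, Sum.inl b => exact absurd he (by simp [SimpleGraph.sum])

lemma matchCount_sum (m : ℕ) :
    matchCount (G ⊕g H) m = ∑ p ∈ Finset.HasAntidiagonal.antidiagonal m, matchCount G p.1 * matchCount H p.2 := by
  classical
  rw [matchCount_def]
  have hms : ∀ p : ℕ × ℕ, matchCount G p.1 * matchCount H p.2 =
      ((((Finset.univ : Finset (Sym2 α)).powersetCard p.1).filter
        (fun s => (∀ e ∈ s, e ∈ G.edgeSet) ∧ ∀ e ∈ s, ∀ f ∈ s, e ≠ f → ∀ v ∈ e, v ∉ f)) ×ˢ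
       (((Finset.univ : Finset (Sym2 β)).powersetCard p.2).filter
        (fun s => (∀ e ∈ s, e ∈ H.edgeSet) ∧ ∀ e ∈ s, ∀ f ∈ s, e ≠ f → ∀ v ∈ e, v ∉ f))).card := by
    intro p
    rw [Finset.card_product, matchCount_def, matchCount_def]
  simp only [hms]
  rw [← Finset.card_sigma]
  symm
  apply Finset.card_nbij
    (i := fun x => (x.2.1.image (Sym2.map Sum.inl)) ∪ (x.2.2.image (Sym2.map Sum.inr)))
  · -- maps into
    rintro ⟨p, u, v⟩ hx
    simp only [Finset.mem_coe, Finset.mem_sigma, Finset.mem_product, Finset.mem_filter,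
      Finset.mem_powersetCard_univ, Finset.HasAntidiagonal.mem_antidiagonal] at hx
    obtain ⟨hp, ⟨hucard, huedge, humatch⟩, ⟨hvcard, hvedge, hvmatch⟩⟩ := hx
    simp only [Finset.mem_coe, Finset.mem_filter, Finset.mem_powersetCard_univ]
    refine ⟨?_, ?_, ?_⟩
    · rw [Finset.card_union_of_disjoint, Finset.card_image_of_injective _
        (Sym2.map.injective Sum.inl_injective), Finset.card_image_of_injective _
        (Sym2.map.injective Sum.inr_injective), hucard, hvcard, hp]
      rw [Finset.disjoint_left]
      intro e he hf
      rw [Finset.mem_image] at he hf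
      obtain ⟨e', -, rfl⟩ := he
      obtain ⟨f', -, hff⟩ := hf
      exact map_inl_ne_inr e' f' hff.symm
    · intro e he
      rcases Finset.mem_union.mp he with h | h
      · rw [Finset.mem_image] at h
        obtain ⟨e', he', rfl⟩ := h
        have := huedge e' he'
        induction e' with
        | _ a b =>
          rw [Sym2.map_pair_eq, mem_edgeSet]
          rw [mem_edgeSet] at this
          exact (sum_adj_inl G H).mpr this
      · rw [Finset.mem_image] at h
        obtain ⟨e', he', rfl⟩ := h
        have := hvedge e' he'
        induction e' with
        | _ a b =>
          rw [Sym2.map_pair_eq, mem_edgeSet]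
          rw [mem_edgeSet] at this
          exact (sum_adj_inr G H).mpr this
    · intro e he f hf hef w hw hwf
      rcases Finset.mem_union.mp he with h | h <;> rcases Finset.mem_union.mp hf with h' | h'
      · rw [Finset.mem_image] at h h'
        obtain ⟨e', he', rfl⟩ := h
        obtain ⟨f', hf', rfl⟩ := h'
        obtain ⟨a, ha, rfl⟩ := Sym2.mem_map.mp hw
        obtain ⟨b, hb, hba⟩ := Sym2.mem_map.mp hwf
        have : a = b := Sum.inl_injective hba.symm
        subst this
        exact humatch e' he' f' hf'
          (fun hh => hef (by rw [hh])) a ha hb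
      · -- e inl, f inr: vertex w in both impossible
        rw [Finset.mem_image] at h h'
        obtain ⟨e', he', rfl⟩ := h
        obtain ⟨f', hf', rfl⟩ := h'
        obtain ⟨a, ha, rfl⟩ := Sym2.mem_map.mp hw
        obtain ⟨b, hb, hba⟩ := Sym2.mem_map.mp hwf
        exact Sum.inl_ne_inr hba.symm
      · rw [Finset.mem_image] at h h'
        obtain ⟨e', he', rfl⟩ := h
        obtain ⟨f', hf', rfl⟩ := h'
        obtain ⟨a, ha, rfl⟩ := Sym2.mem_map.mp hw
        obtain ⟨b, hb, hba⟩ := Sym2.mem_map.mp hwf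
        exact Sum.inl_ne_inr hba
      · rw [Finset.mem_image] at h h'
        obtain ⟨e', he', rfl⟩ := h
        obtain ⟨f', hf', rfl⟩ := h'
        obtain ⟨a, ha, rfl⟩ := Sym2.mem_map.mp hw
        obtain ⟨b, hb, hba⟩ := Sym2.mem_map.mp hwf
        have : a = b := Sum.inr_injective hba.symm
        subst this
        exact hvmatch e' he' f' hf' (fun hh => hef (by rw [hh])) a ha hb
  · -- injective
    rintro ⟨p, u, v⟩ hx ⟨q, u', v'⟩ hy hxy
    simp only [Finset.mem_coe, Finset.mem_sigma, Finset.mem_product, Finset.mem_filter,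
      Finset.mem_powersetCard_univ, Finset.HasAntidiagonal.mem_antidiagonal] at hx hy
    simp only at hxy
    have hu : u = u' := by
      ext e
      constructor
      · intro he
        have : Sym2.map Sum.inl e ∈ u'.image (Sym2.map Sum.inl) ∪ v'.image (Sym2.map Sum.inr) :=
          hxy ▸ Finset.mem_union_left _ (Finset.mem_image_of_mem _ he)
        rcases Finset.mem_union.mp this with h | h
        · rw [Finset.mem_image] at h
          obtain ⟨e', he', hee⟩ := h
          rwa [← Sym2.map.injective Sum.inl_injective hee]
        · rw [Finset.mem_image] at h
          obtain ⟨e', he', hee⟩ := h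
          exact absurd hee.symm (map_inl_ne_inr e e')
      · intro he
        have : Sym2.map Sum.inl e ∈ u.image (Sym2.map Sum.inl) ∪ v.image (Sym2.map Sum.inr) :=
          hxy ▸ Finset.mem_union_left _ (Finset.mem_image_of_mem _ he)
        rcases Finset.mem_union.mp this with h | h
        · rw [Finset.mem_image] at h
          obtain ⟨e', he', hee⟩ := h
          rwa [← Sym2.map.injective Sum.inl_injective hee]
        · rw [Finset.mem_image] at h
          obtain ⟨e', he', hee⟩ := h
          exact absurd hee.symm (map_inl_ne_inr e e')
    have hv : v = v' := by
      ext e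
      constructor
      · intro he
        have : Sym2.map Sum.inr e ∈ u'.image (Sym2.map Sum.inl) ∪ v'.image (Sym2.map Sum.inr) :=
          hxy ▸ Finset.mem_union_right _ (Finset.mem_image_of_mem _ he)
        rcases Finset.mem_union.mp this with h | h
        · rw [Finset.mem_image] at h
          obtain ⟨e', he', hee⟩ := h
          exact absurd hee (map_inl_ne_inr e' e)
        · rw [Finset.mem_image] at h
          obtain ⟨e', he', hee⟩ := h
          rwa [← Sym2.map.injective Sum.inr_injective hee]
      · intro he
        have : Sym2.map Sum.inr e ∈ u.image (Sym2.map Sum.inl) ∪ v.image (Sym2.map Sum.inr) :=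
          hxy ▸ Finset.mem_union_right _ (Finset.mem_image_of_mem _ he)
        rcases Finset.mem_union.mp this with h | h
        · rw [Finset.mem_image] at h
          obtain ⟨e', he', hee⟩ := h
          exact absurd hee (map_inl_ne_inr e' e)
        · rw [Finset.mem_image] at h
          obtain ⟨e', he', hee⟩ := h
          rwa [← Sym2.map.injective Sum.inr_injective hee]
    subst hu
    subst hv
    have hq : p = q := by
      have h1 := hx.2.1.1
      have h2 := hy.2.1.1
      have h3 := hx.2.2.1
      have h4 := hy.2.2.1
      ext <;> simp_all
    subst hq
    rfl
  · -- surjective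
    intro s hs
    simp only [Finset.mem_coe, Finset.mem_filter, Finset.mem_powersetCard_univ] at hs
    obtain ⟨hcard, hedge, hmatch⟩ := hs
    set u : Finset (Sym2 α) := Finset.univ.filter (fun e => Sym2.map Sum.inl e ∈ s) with hu
    set v : Finset (Sym2 β) := Finset.univ.filter (fun e => Sym2.map Sum.inr e ∈ s) with hv
    have hsim : u.image (Sym2.map Sum.inl) ∪ v.image (Sym2.map Sum.inr) = s := by
      ext e
      constructor
      · intro he
        rcases Finset.mem_union.mp he with h | h <;> rw [Finset.mem_image] at h
        · obtain ⟨e', he', rfl⟩ := h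
          exact (Finset.mem_filter.mp he').2
        · obtain ⟨e', he', rfl⟩ := h
          exact (Finset.mem_filter.mp he').2
      · intro he
        rcases sum_edge_form G H (hedge e he) with ⟨e', -, rfl⟩ | ⟨e', -, rfl⟩
        · exact Finset.mem_union_left _ (Finset.mem_image_of_mem _
            (Finset.mem_filter.mpr ⟨Finset.mem_univ _, he⟩))
        · exact Finset.mem_union_right _ (Finset.mem_image_of_mem _
            (Finset.mem_filter.mpr ⟨Finset.mem_univ _, he⟩))
    have hdisj : Disjoint (u.image (Sym2.map Sum.inl)) (v.image (Sym2.map Sum.inr)) := by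
      rw [Finset.disjoint_left]
      intro e he hf
      rw [Finset.mem_image] at he hf
      obtain ⟨e', -, rfl⟩ := he
      obtain ⟨f', -, hff⟩ := hf
      exact map_inl_ne_inr e' f' hff.symm
    have hcards : u.card + v.card = m := by
      rw [← hcard, ← hsim, Finset.card_union_of_disjoint hdisj,
        Finset.card_image_of_injective _ (Sym2.map.injective Sum.inl_injective),
        Finset.card_image_of_injective _ (Sym2.map.injective Sum.inr_injective)]
    refine ⟨⟨(u.card, v.card), (u, v)⟩, Finset.mem_coe.mpr ?_, hsim⟩
    simp only [Finset.mem_sigma, Finset.mem_product, Finset.mem_filter,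
      Finset.mem_powersetCard_univ, Finset.HasAntidiagonal.mem_antidiagonal]
    refine ⟨hcards, ⟨trivial, ?_, ?_⟩, ⟨trivial, ?_, ?_⟩⟩
    · intro e he
      have := hedge _ (Finset.mem_filter.mp he).2
      induction e with
      | _ a b =>
        rw [Sym2.map_pair_eq, mem_edgeSet] at this
        rw [mem_edgeSet]
        exact (sum_adj_inl G H).mp this
    · intro e he f hf hef w hw
      have hes := (Finset.mem_filter.mp he).2
      have hfs := (Finset.mem_filter.mp hf).2
      have hne : Sym2.map (Sum.inl : α → α ⊕ β) e ≠ Sym2.map (Sum.inl : α → α ⊕ β) f :=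
        fun h => hef (Sym2.map.injective Sum.inl_injective h)
      have := hmatch _ hes _ hfs hne (Sum.inl w) (Sym2.mem_map.mpr ⟨w, hw, rfl⟩)
      intro hwf
      exact this (Sym2.mem_map.mpr ⟨w, hwf, rfl⟩)
    · intro e he
      have := hedge _ (Finset.mem_filter.mp he).2
      induction e with
      | _ a b =>
        rw [Sym2.map_pair_eq, mem_edgeSet] at this
        rw [mem_edgeSet]
        exact (sum_adj_inr G H).mp this
    · intro e he f hf hef w hw
      have hes := (Finset.mem_filter.mp he).2
      have hfs := (Finset.mem_filter.mp hf).2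
      have hne : Sym2.map (Sum.inr : β → α ⊕ β) e ≠ Sym2.map (Sum.inr : β → α ⊕ β) f :=
        fun h => hef (Sym2.map.injective Sum.inr_injective h)
      have := hmatch _ hes _ hfs hne (Sum.inr w) (Sym2.mem_map.mpr ⟨w, hw, rfl⟩)
      intro hwf
      exact this (Sym2.mem_map.mpr ⟨w, hwf, rfl⟩)

end SumSec


/-- For odd `3 ≤ i ≤ j`, every coefficient of `q_i q_j` is at most the corresponding
coefficient of `q_{i+j}`.  Consequently, `φ(m, C_i ∪ C_j) ≤ φ(m, C_{i+j})` for all `m`. -/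
theorem odd_cycles_merge (i j : ℕ) (h3 : 3 ≤ i) (hij : i ≤ j) (hi : Odd i) (hj : Odd j) :
    (∀ m : ℕ, (qpoly i * qpoly j).coeff m ≤ (qpoly (i + j)).coeff m) ∧
    (∀ m : ℕ,
      matchCount (SimpleGraph.cycleGraph i ⊕g SimpleGraph.cycleGraph j) m ≤
        matchCount (SimpleGraph.cycleGraph (i + j)) m) := by
  have hpart1 := part1 i j hij hi
  refine ⟨hpart1, ?_⟩
  intro m
  obtain ⟨a, rfl⟩ : ∃ a, i = a + 3 := ⟨i - 3, by omega⟩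
  obtain ⟨b, rfl⟩ : ∃ b, j = b + 3 := ⟨j - 3, by omega⟩
  rw [← Nat.cast_le (α := ℚ)]
  have hL : ((matchCount (cycleGraph (a+3) ⊕g cycleGraph (b+3)) m : ℕ) : ℚ)
      = (qpoly (a+3) * qpoly (b+3)).coeff m := by
    rw [matchCount_sum, coeff_mul]
    push_cast
    apply Finset.sum_congr rfl
    intro p hp
    rw [matchCount_cycle, matchCount_cycle]
    push_cast
    rw [NC_card_eq_coeff, NC_card_eq_coeff]
  have hR : ((matchCount (cycleGraph (a+3+(b+3))) m : ℕ) : ℚ)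
      = (qpoly (a+3+(b+3))).coeff m := by
    rw [show a+3+(b+3) = (a+b+3)+3 by ring, matchCount_cycle, NC_card_eq_coeff]
  rw [hL, hR]
  exact hpart1 m
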